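/- arXiv:2307.11366 — 2 statements merged into one kernel-verified Lean document; each statement's English description precedes it below -/
import Mathlib

section
/- A zonotope generated by a finite set G of n pairwise non-collinear nonzero vectors admits exactly 2^n sets of generators, each obtained from G by negating a subset of its vectors, and all of these sets have cardinality n. -/
open Pointwise
open scoped Classical

noncomputable section

abbrev E3 := EuclideanSpace ℝ (Fin 3)

def IsPolytope {E : Type*} [NormedAddCommGroup E] [InnerProductSpace ℝ E] (P : Set E) : Prop :=
  ∃ S : Finset E, S.Nonempty ∧ P = convexHull ℝ (S : Set E)

def IsFace {E : Type*} [NormedAddCommGroup E] [InnerProductSpace ℝ E] (P F : Set E) : Prop :=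
  F.Nonempty ∧ IsExposed ℝ P F

def faceDim {E : Type*} [NormedAddCommGroup E] [InnerProductSpace ℝ E] (F : Set E) : ℕ :=
  Module.finrank ℝ (vectorSpan ℝ F)

def IsEdge (P e : Set E3) : Prop := IsFace P e ∧ faceDim e = 1

def IsFacet (P F : Set E3) : Prop := IsFace P F ∧ faceDim F = 2

def normalCone (P F : Set E3) : Set E3 :=
  {u | ∀ x ∈ P, ∀ y ∈ F, (inner ℝ u x : ℝ) ≤ (inner ℝ u y : ℝ)}

def aggCone (P : Set E3) (u : E3) : Set E3 :=
  ⋃ F ∈ {F : Set E3 | IsFace P F ∧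
      Module.finrank ℝ (Submodule.span ℝ (normalCone P F)) = 2 ∧
      normalCone P F ⊆ ((ℝ ∙ u)ᗮ : Set E3)},
    normalCone P F

def firstNonzeroPos (u : E3) : Prop := ∃ i : Fin 3, 0 < u i ∧ ∀ j < i, u j = 0

def IsEdgeDirection (P : Set E3) (u : E3) : Prop :=
  ‖u‖ = 1 ∧ firstNonzeroPos u ∧ ∃ e : Set E3, IsEdge P e ∧ vectorSpan ℝ e = ℝ ∙ u

def proj (H : Submodule ℝ E3) (x : E3) : E3 := (H.orthogonalProjectionOnto x : E3)

def IsPolygonWith (Q : Set E3) (k : ℕ) : Prop :=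
  IsPolytope Q ∧ Module.finrank ℝ (vectorSpan ℝ Q) = 2 ∧ (Set.extremePoints ℝ Q).ncard = k

def IsKEquiprojective (P : Set E3) (k : ℕ) : Prop :=
  ∀ H : Submodule ℝ E3, Module.finrank ℝ H = 2 →
    (∀ F : Set E3, IsFacet P F → ¬ (Hᗮ ≤ vectorSpan ℝ F)) →
    IsPolygonWith (proj H '' P) k

def IsEquiprojective (P : Set E3) : Prop := ∃ k, IsKEquiprojective P k

def mult (P : Set E3) (u : E3) : ℕ :=
  if aggCone P u = ((ℝ ∙ u)ᗮ : Set E3) then 2 else 1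

def kappa (P : Set E3) : ℕ := ∑ᶠ u ∈ {u : E3 | IsEdgeDirection P u}, mult P u

def PairwiseNoncollinear {E : Type*} [AddCommGroup E] [Module ℝ E] (G : Finset E) : Prop :=
  (∀ g ∈ G, g ≠ 0) ∧ ∀ g ∈ G, ∀ g' ∈ G, g ≠ g' → ∀ c : ℝ, g' ≠ c • g

def zonotope {E : Type*} [NormedAddCommGroup E] [InnerProductSpace ℝ E] (G : Finset E) : Set E :=
  ∑ g ∈ G, segment ℝ (0 : E) g

def IsGenSet {E : Type*} [NormedAddCommGroup E] [InnerProductSpace ℝ E]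
    (Z : Set E) (G : Finset E) : Prop :=
  PairwiseNoncollinear G ∧ ∃ v : E, Z = v +ᵥ zonotope G


section Aux
open scoped RealInnerProductSpace

variable {d : ℕ}
local notation "EE" => EuclideanSpace ℝ (Fin d)

lemma mem_zono {G : Finset EE} {x : EE} :
    x ∈ zonotope G ↔ ∃ c : EE → ℝ, (∀ g ∈ G, c g ∈ Set.Icc (0:ℝ) 1) ∧ ∑ g ∈ G, c g • g = x := by
  rw [zonotope, Set.mem_finset_sum]
  constructor
  · rintro ⟨f, hf, rfl⟩
    have : ∀ g ∈ G, ∃ t : ℝ, t ∈ Set.Icc (0:ℝ) 1 ∧ t • g = f g := by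
      intro g hg
      have := hf hg
      rw [segment_eq_image] at this
      obtain ⟨t, ht, h⟩ := this
      exact ⟨t, ht, by simpa using h⟩
    choose c hc1 hc2 using this
    refine ⟨fun g => if h : g ∈ G then c g h else 0, fun g hg => by simp [hg, hc1], ?_⟩
    refine Finset.sum_congr rfl (fun g hg => ?_)
    simp only [hg, dif_pos]
    exact hc2 g hg
  · rintro ⟨c, hc, rfl⟩
    refine ⟨fun g => c g • g, fun {g} hg => ?_, rfl⟩
    rw [segment_eq_image]
    exact ⟨c g, hc g hg, by simp⟩

noncomputable def supf (G : Finset EE) (u : EE) : ℝ := ∑ g ∈ G, max 0 ⟪g, u⟫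

lemma isGreatest_supf (G : Finset EE) (v u : EE) :
    IsGreatest ((fun x : EE => ⟪x, u⟫) '' (v +ᵥ zonotope G)) (⟪v, u⟫ + supf G u) := by
  constructor
  · refine ⟨v + ∑ g ∈ G, (if 0 < ⟪g, u⟫ then (1:ℝ) else 0) • g, ?_, ?_⟩
    · rw [Set.mem_vadd_set]
      refine ⟨_, ?_, rfl⟩
      exact mem_zono.2 ⟨_, fun g hg => by split <;> simp [Set.mem_Icc] <;> norm_num, rfl⟩
    · show ⟪_,_⟫ = _
      rw [inner_add_left, sum_inner]
      congr 1
      rw [supf]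
      refine Finset.sum_congr rfl fun g hg => ?_
      rw [real_inner_smul_left]
      rcases lt_or_ge 0 ⟪g, u⟫ with h | h
      · rw [if_pos h, one_mul, max_eq_right h.le]
      · rw [if_neg (not_lt.2 h), max_eq_left h]; ring
  · rintro r ⟨x, hx, rfl⟩
    rw [Set.mem_vadd_set] at hx
    obtain ⟨y, hy, rfl⟩ := hx
    obtain ⟨c, hc, rfl⟩ := mem_zono.1 hy
    simp only [vadd_eq_add, inner_add_left, sum_inner]
    gcongr
    rw [supf]
    refine Finset.sum_le_sum fun g hg => ?_
    rw [real_inner_smul_left]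
    obtain ⟨h0, h1⟩ := hc g hg
    rcases le_or_gt 0 ⟪g, u⟫ with h | h
    · calc c g * ⟪g, u⟫ ≤ 1 * ⟪g, u⟫ := by nlinarith
        _ ≤ max 0 ⟪g, u⟫ := by rw [one_mul]; exact le_max_right _ _
    · calc c g * ⟪g, u⟫ ≤ 0 := by nlinarith
        _ ≤ _ := le_max_left _ _

lemma supf_eq {G G' : Finset EE} {v v' : EE} (h : v +ᵥ zonotope G = v' +ᵥ zonotope G') (u : EE) :
    ⟪v, u⟫ + supf G u = ⟪v', u⟫ + supf G' u := by
  have h1 := isGreatest_supf G v u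
  have h2 := isGreatest_supf G' v' u
  rw [h] at h1
  exact h1.unique h2

lemma abs_sum_eq {G G' : Finset EE} {v v' : EE} (h : v +ᵥ zonotope G = v' +ᵥ zonotope G') (u : EE) :
    ∑ g ∈ G, |⟪g, u⟫| = ∑ g ∈ G', |⟪g, u⟫| := by
  have key : ∀ (H : Finset EE), supf H u + supf H (-u) = ∑ g ∈ H, |⟪g, u⟫| := by
    intro H
    rw [supf, supf, ← Finset.sum_add_distrib]
    refine Finset.sum_congr rfl fun g hg => ?_
    rw [inner_neg_right]
    rcases le_total 0 ⟪g, u⟫ with h | h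
    · rw [max_eq_right h, max_eq_left (by linarith), abs_of_nonneg h]; ring
    · rw [max_eq_left h, max_eq_right (by linarith), abs_of_nonpos h]; ring
  have e1 := supf_eq h u
  have e2 := supf_eq h (-u)
  rw [inner_neg_right, inner_neg_right] at e2
  have := key G
  have := key G'
  linarith

lemma exists_small_t (H : Finset EE) (u w : EE) :
    ∃ t : ℝ, 0 < t ∧ ∀ g ∈ H, ⟪g, u⟫ ≠ 0 → t * |⟪g, w⟫| < |⟪g, u⟫| := by
  classical
  set B := H.filter (fun g => ⟪g, u⟫ ≠ 0) with hB
  by_cases hne : B.Nonempty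
  · refine ⟨B.inf' hne (fun g => |⟪g, u⟫| / (2 * (|⟪g, w⟫| + 1))), ?_, ?_⟩
    · rw [Finset.lt_inf'_iff]
      intro g hg
      have : ⟪g, u⟫ ≠ 0 := (Finset.mem_filter.1 hg).2
      positivity
    · intro g hg hgu
      have hgB : g ∈ B := Finset.mem_filter.2 ⟨hg, hgu⟩
      have hle := Finset.inf'_le (fun g => |⟪g, u⟫| / (2 * (|⟪g, w⟫| + 1))) hgB
      set t := B.inf' hne (fun g => |⟪g, u⟫| / (2 * (|⟪g, w⟫| + 1)))
      have ht : 0 < t := by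
        rw [Finset.lt_inf'_iff]
        intro g hg
        have : ⟪g, u⟫ ≠ 0 := (Finset.mem_filter.1 hg).2
        positivity
      rw [le_div_iff₀ (by positivity)] at hle
      have hb : (0:ℝ) ≤ |⟪g, w⟫| := abs_nonneg _
      nlinarith
  · exact ⟨1, one_pos, fun g hg hgu => absurd (Finset.mem_filter.2 ⟨hg, hgu⟩ : g ∈ B)
      (by have := Finset.not_nonempty_iff_eq_empty.1 hne
          rw [hB] at this; rw [this]; exact Finset.notMem_empty g)⟩

lemma abs_two_sided {a b t : ℝ} (ht : 0 < t) (h : a ≠ 0 → t * |b| < |a|) :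
    |a + t * b| + |a - t * b| = 2 * |a| + (if a = 0 then 2 * (t * |b|) else 0) := by
  rcases eq_or_ne a 0 with rfl | ha
  · simp [abs_mul, abs_of_pos ht]; ring
  · rw [if_neg ha]
    have hb := h ha
    have h1 : |t * b| ≤ t * |b| := by rw [abs_mul, abs_of_pos ht]
    have h2 := abs_le.1 (le_of_eq (rfl : |t*b| = |t*b|))
    have h3 : -(t*|b|) ≤ t*b := by cases abs_cases (t*b) <;> linarith [abs_mul t b, abs_of_pos ht]
    have h4 : t*b ≤ t*|b| := by cases abs_cases (t*b) <;> linarith [abs_mul t b, abs_of_pos ht]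
    rcases lt_or_gt_of_ne ha with hneg | hpos
    · have := abs_of_neg hneg
      rw [abs_of_neg (by linarith), abs_of_neg (by linarith)]
      linarith
    · have := abs_of_pos hpos
      rw [abs_of_pos (by linarith), abs_of_pos (by linarith)]
      linarith

lemma filter_abs_eq {G G' : Finset EE} {v v' : EE}
    (h : v +ᵥ zonotope G = v' +ᵥ zonotope G') (u w : EE) :
    ∑ g ∈ G.filter (fun g => ⟪g, u⟫ = 0), |⟪g, w⟫| =
      ∑ g ∈ G'.filter (fun g => ⟪g, u⟫ = 0), |⟪g, w⟫| := by
  classical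
  obtain ⟨t, ht, hts⟩ := exists_small_t (G ∪ G') u w
  have key : ∀ H : Finset EE, (∀ g ∈ H, ⟪g, u⟫ ≠ 0 → t * |⟪g, w⟫| < |⟪g, u⟫|) →
      ∑ g ∈ H, |⟪g, u + t • w⟫| + ∑ g ∈ H, |⟪g, u - t • w⟫| =
        2 * ∑ g ∈ H, |⟪g, u⟫| + 2 * t * ∑ g ∈ H.filter (fun g => ⟪g, u⟫ = 0), |⟪g, w⟫| := by
    intro H hH
    rw [← Finset.sum_add_distrib, Finset.mul_sum, Finset.mul_sum, Finset.sum_filter,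
      ← Finset.sum_add_distrib]
    refine Finset.sum_congr rfl fun g hg => ?_
    rw [inner_add_right, inner_sub_right, real_inner_smul_right]
    rw [abs_two_sided ht (hH g hg)]
    split <;> ring
  have k1 := key G (fun g hg => hts g (Finset.mem_union_left _ hg))
  have k2 := key G' (fun g hg => hts g (Finset.mem_union_right _ hg))
  have e1 := abs_sum_eq h (u + t • w)
  have e2 := abs_sum_eq h (u - t • w)
  have e3 := abs_sum_eq h u
  rw [e1, e2, e3, k2] at k1
  have h2t : (0:ℝ) < 2 * t := by linarith
  exact mul_left_cancel₀ (ne_of_gt h2t) (by linarith)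

lemma exists_generic (g : EE) (hg : g ≠ 0) (H : Finset EE) :
    ∃ u : EE, ⟪g, u⟫ = 0 ∧ ∀ h ∈ H, ⟪h, u⟫ = 0 → ∃ c : ℝ, h = c • g := by
  classical
  set V : Submodule ℝ EE := (ℝ ∙ g)ᗮ with hV
  set q : EE → Subspace ℝ V := fun h => ((ℝ ∙ h)ᗮ).comap V.subtype with hq
  set bad : Finset EE := H.filter (fun h => ¬∃ c : ℝ, h = c • g) with hbad
  have hqtop : ∀ h ∈ bad, q h ≠ ⊤ := by
    intro h hh htop
    have hnc : ¬∃ c : ℝ, h = c • g := (Finset.mem_filter.1 hh).2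
    have hle : V ≤ (ℝ ∙ h)ᗮ := by
      intro x hx
      have : (⟨x, hx⟩ : V) ∈ q h := htop ▸ Submodule.mem_top
      exact this
    have h2 : (ℝ ∙ h) ≤ ℝ ∙ g := by
      calc (ℝ ∙ h) ≤ (ℝ ∙ h)ᗮᗮ := Submodule.le_orthogonal_orthogonal _
        _ ≤ Vᗮ := Submodule.orthogonal_le hle
        _ = ℝ ∙ g := Submodule.orthogonal_orthogonal _
    obtain ⟨c, hc⟩ := Submodule.mem_span_singleton.1 (h2 (Submodule.mem_span_singleton_self h))
    exact hnc ⟨c, hc.symm⟩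
  have hcov : ⋃ p ∈ bad.image q, (p : Set V) ≠ Set.univ :=
    Subspace.biUnion_ne_univ_of_top_notMem (by
      intro htop
      obtain ⟨h, hh, hqh⟩ := Finset.mem_image.1 htop
      exact hqtop h hh hqh)
  obtain ⟨x, hx⟩ := Set.ne_univ_iff_exists_notMem _ |>.1 hcov
  simp only [Set.mem_iUnion, not_exists] at hx
  refine ⟨(x : EE), ?_, ?_⟩
  · have hx2 : (x : EE) ∈ (Submodule.span ℝ {g})ᗮ := x.2
    rw [Submodule.mem_orthogonal] at hx2
    exact hx2 g (Submodule.mem_span_singleton_self g)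
  · intro h hh hinner
    by_contra hnc
    have hhbad : h ∈ bad := Finset.mem_filter.2 ⟨hh, hnc⟩
    refine hx (q h) (Finset.mem_image_of_mem q hhbad) ?_
    show x ∈ q h
    simp only [hq, Submodule.mem_comap, Submodule.coe_subtype, Submodule.mem_orthogonal]
    intro y hy
    obtain ⟨c, rfl⟩ := Submodule.mem_span_singleton.1 hy
    rw [real_inner_smul_left]
    rw [hinner, mul_zero]

lemma neg_not_mem {G : Finset EE} (hG : PairwiseNoncollinear G) {x : EE} (hx : x ∈ G) : -x ∉ G := by
  intro hnx
  have hne : x ≠ -x := by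
    intro h
    have h2 : (2:ℝ) • x = 0 := by rw [two_smul]; nth_rewrite 2 [h]; simp
    rcases smul_eq_zero.1 h2 with h3 | h3
    · norm_num at h3
    · exact hG.1 x hx h3
  exact hG.2 x hx (-x) hnx hne (-1) (neg_one_smul ℝ x).symm

lemma match_gen {G G' : Finset EE} {v v' : EE} (hG : PairwiseNoncollinear G) (hG' : PairwiseNoncollinear G')
    (h : v +ᵥ zonotope G = v' +ᵥ zonotope G') : ∀ g ∈ G, g ∈ G' ∨ -g ∈ G' := by
  intro g hgG
  obtain ⟨u, hu0, hu⟩ := exists_generic g (hG.1 g hgG) (G ∪ G')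
  have key := fun w => filter_abs_eq h u w
  have hGf : G.filter (fun x => ⟪x, u⟫ = 0) = {g} := by
    ext x
    simp only [Finset.mem_filter, Finset.mem_singleton]
    constructor
    · rintro ⟨hxG, hx0⟩
      by_contra hne
      obtain ⟨c, hc⟩ := hu x (Finset.mem_union_left _ hxG) hx0
      exact hG.2 g hgG x hxG (fun e => hne e.symm) c hc
    · rintro rfl
      exact ⟨hgG, hu0⟩
  have hTne : (G'.filter (fun x => ⟪x, u⟫ = 0)).Nonempty := by
    by_contra hemp
    rw [Finset.not_nonempty_iff_eq_empty] at hemp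
    have := key g
    rw [hGf, hemp] at this
    simp only [Finset.sum_singleton, Finset.sum_empty] at this
    rw [abs_eq_zero] at this
    exact hG.1 g hgG (inner_self_eq_zero.1 this)
  obtain ⟨g', hg'T⟩ := hTne
  obtain ⟨hg'G', hg'0⟩ := Finset.mem_filter.1 hg'T
  obtain ⟨c', hc'⟩ := hu g' (Finset.mem_union_right _ hg'G') hg'0
  have hc'0 : c' ≠ 0 := by
    rintro rfl
    exact hG'.1 g' hg'G' (by simpa using hc')
  have hT : G'.filter (fun x => ⟪x, u⟫ = 0) = {g'} := by
    ext x
    simp only [Finset.mem_filter, Finset.mem_singleton]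
    constructor
    · rintro ⟨hxG', hx0⟩
      by_contra hne
      obtain ⟨c, hc⟩ := hu x (Finset.mem_union_right _ hxG') hx0
      refine hG'.2 g' hg'G' x hxG' (fun e => hne e.symm) (c / c') ?_
      rw [hc, hc', smul_smul, div_mul_cancel₀ _ hc'0]
    · rintro rfl
      exact ⟨hg'G', hg'0⟩
  have habs : ∀ w : EE, |⟪g, w⟫| = |⟪g', w⟫| := by
    intro w
    have := key w
    rw [hGf, hT] at this
    simpa using this
  have hcabs : |c'| = 1 := by
    have := habs g
    rw [hc', real_inner_smul_left, abs_mul] at this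
    have hgg : |⟪g, g⟫| ≠ 0 := fun e => hG.1 g hgG (inner_self_eq_zero.1 (abs_eq_zero.1 e))
    exact (mul_right_cancel₀ hgg ((one_mul _).trans this)).symm
  rcases abs_eq (by norm_num : (0:ℝ) ≤ 1) |>.1 hcabs with h1 | h1
  · rw [h1, one_smul] at hc'
    left; rw [← hc']; exact hg'G'
  · rw [h1, neg_one_smul] at hc'
    right; rw [← hc']; exact hg'G'

lemma vadd_set_eq_singleton_add {F : Type*} [AddCommGroup F] (v : F) (A : Set F) :
    v +ᵥ A = {v} + A := by
  rw [Set.singleton_add, ← Set.image_vadd]; rfl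

lemma seg_neg (s : EE) : segment ℝ (0:EE) (-s) = (-s) +ᵥ segment ℝ (0:EE) s := by
  rw [← Set.image_vadd]
  have : (fun x => -s +ᵥ x) = (fun x => -s + x) := rfl
  rw [this, segment_translate_image]
  rw [add_zero, neg_add_cancel, segment_symm]

lemma no_both {G S : Finset EE} (hG : PairwiseNoncollinear G) (hS : S ⊆ G) {x : EE}
    (h1 : x ∈ (G \ S) ∪ S.image (fun g => -g))
    (h2 : -x ∈ (G \ S) ∪ S.image (fun g => -g)) : False := by
  simp only [Finset.mem_union, Finset.mem_sdiff, Finset.mem_image] at h1 h2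
  rcases h1 with ⟨hxG, hxS⟩ | ⟨s1, hs1, hs1x⟩
  · rcases h2 with ⟨hnxG, _⟩ | ⟨s2, hs2, hs2x⟩
    · exact neg_not_mem hG hxG hnxG
    · exact hxS (by rwa [neg_inj.1 hs2x] at hs2)
  · rcases h2 with ⟨hnxG, hnxS⟩ | ⟨s2, hs2, hs2x⟩
    · have hxe : -x = s1 := by rw [← hs1x, neg_neg]
      exact hnxS (hxe ▸ hs1)
    · have hx : x = -s1 := hs1x.symm
      have hnx : -x = -s2 := hs2x.symm
      have : s2 = -s1 := (neg_inj.mp hnx).symm.trans hx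
      exact neg_not_mem hG (hS hs1) (this ▸ hS hs2)

lemma forward_rep {G S : Finset EE} (hS : S ⊆ G) {x : EE}
    (hx : x ∈ (G \ S) ∪ S.image (fun g => -g)) :
    ∃ g ∈ G, ∃ ε : ℝ, (ε = 1 ∨ ε = -1) ∧ x = ε • g := by
  simp only [Finset.mem_union, Finset.mem_sdiff, Finset.mem_image] at hx
  rcases hx with ⟨hxG, _⟩ | ⟨s, hs, hsx⟩
  · exact ⟨x, hxG, 1, Or.inl rfl, (one_smul ℝ x).symm⟩
  · exact ⟨s, hS hs, -1, Or.inr rfl, by rw [← hsx, neg_one_smul]⟩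

lemma forward_pnc {G S : Finset EE} (hG : PairwiseNoncollinear G) (hS : S ⊆ G) :
    PairwiseNoncollinear ((G \ S) ∪ S.image (fun g => -g)) := by
  constructor
  · intro x hx
    obtain ⟨g, hgG, ε, hε, rfl⟩ := forward_rep hS hx
    have hg0 := hG.1 g hgG
    rcases hε with rfl | rfl <;> simp [hg0]
  · intro a ha b hb hab c hbc
    obtain ⟨ga, hga, εa, hεa, hae⟩ := forward_rep hS ha
    obtain ⟨gb, hgb, εb, hεb, hbe⟩ := forward_rep hS hb
    by_cases hgg : ga = gb
    · subst hgg
      have hεne : εa ≠ εb := by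
        rintro rfl
        exact hab (hae.trans hbe.symm)
      have hba : b = -a := by
        rw [hae, hbe]
        rcases hεa with rfl | rfl <;> rcases hεb with rfl | rfl <;>
          first
          | exact absurd rfl hεne
          | simp
      exact no_both hG hS ha (hba ▸ hb)
    · refine hG.2 ga hga gb hgb hgg (εb * c * εa) ?_
      have hεb2 : εb * εb = 1 := by rcases hεb with rfl | rfl <;> norm_num
      have : εb • gb = (c * εa) • ga := by
        rw [← hbe, hbc, hae, smul_smul]
      calc gb = (εb * εb) • gb := by rw [hεb2, one_smul]
        _ = εb • (εb • gb) := by rw [smul_smul]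
        _ = εb • ((c * εa) • ga) := by rw [this]
        _ = (εb * c * εa) • ga := by rw [smul_smul]; ring_nf

lemma forward_disj {G S : Finset EE} (hG : PairwiseNoncollinear G) (hS : S ⊆ G) :
    Disjoint (G \ S) (S.image (fun g => -g)) := by
  rw [Finset.disjoint_left]
  rintro x hx1 hx2
  obtain ⟨s, hs, hsx⟩ := Finset.mem_image.1 hx2
  have hxG := (Finset.mem_sdiff.1 hx1).1
  exact neg_not_mem hG (hS hs) (by rwa [hsx])

lemma forward_card {G S : Finset EE} (hG : PairwiseNoncollinear G) (hS : S ⊆ G) :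
    ((G \ S) ∪ S.image (fun g => -g)).card = G.card := by
  rw [Finset.card_union_of_disjoint (forward_disj hG hS),
    Finset.card_image_of_injective _ neg_injective, Finset.card_sdiff_of_subset hS,
    Nat.sub_add_cancel (Finset.card_le_card hS)]

lemma forward_zono {G S : Finset EE} (hG : PairwiseNoncollinear G) (hS : S ⊆ G) :
    zonotope ((G \ S) ∪ S.image (fun g => -g)) = (-(∑ s ∈ S, s)) +ᵥ zonotope G := by
  rw [zonotope, zonotope, Finset.sum_union (forward_disj hG hS),
    Finset.sum_image (fun x _ y _ h => neg_injective h)]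
  have hsing : ∀ T : Finset EE, (∑ x ∈ T, ({-x} : Set EE)) = {-(∑ x ∈ T, x)} := by
    intro T
    induction T using Finset.induction with
    | empty => simp; rfl
    | insert a s h ih =>
        rw [Finset.sum_insert h, Finset.sum_insert h, ih, Set.singleton_add_singleton, neg_add]
  have h1 : ∑ s ∈ S, segment ℝ (0:EE) (-s) = ({-(∑ s ∈ S, s)} : Set EE) + ∑ s ∈ S, segment ℝ (0:EE) s := by
    rw [Finset.sum_congr rfl (fun s _ => seg_neg s),
      Finset.sum_congr rfl (fun s _ => vadd_set_eq_singleton_add (-s) _)]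
    rw [Finset.sum_add_distrib, hsing S]
  rw [h1, vadd_set_eq_singleton_add, ← Finset.sum_sdiff hS]
  abel

lemma struct {G G' : Finset EE} {v v' : EE} (hG : PairwiseNoncollinear G) (hG' : PairwiseNoncollinear G')
    (h : v +ᵥ zonotope G = v' +ᵥ zonotope G') :
    G' = (G \ G.filter (fun g => -g ∈ G')) ∪
      (G.filter (fun g => -g ∈ G')).image (fun g => -g) := by
  have m1 := match_gen hG hG' h
  have m2 := match_gen hG' hG h.symm
  ext x
  simp only [Finset.mem_union, Finset.mem_sdiff, Finset.mem_filter, Finset.mem_image]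
  constructor
  · intro hxG'
    rcases m2 x hxG' with hxG | hnxG
    · left
      exact ⟨hxG, fun hmem => neg_not_mem hG' hxG' hmem.2⟩
    · right
      exact ⟨-x, ⟨hnxG, by simpa⟩, by simp⟩
  · rintro (⟨⟨hxG, hxnS⟩⟩ | ⟨s, ⟨hsG, hsnegG'⟩, rfl⟩)
    · rcases m1 x hxG with h1 | h1
      · exact h1
      · exact absurd ⟨hxG, h1⟩ hxnS
    · exact hsnegG'

end Aux

theorem generator_sets_count (d n : ℕ) (Z : Set (EuclideanSpace ℝ (Fin d)))
    (G : Finset (EuclideanSpace ℝ (Fin d))) (hG : IsGenSet Z G) (hn : G.card = n) :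
    {G' : Finset (EuclideanSpace ℝ (Fin d)) | IsGenSet Z G'}.ncard = 2 ^ n ∧
    (∀ G' : Finset (EuclideanSpace ℝ (Fin d)), IsGenSet Z G' →
      ∃ S ⊆ G, G' = (G \ S) ∪ S.image (fun g => -g)) ∧
    (∀ G' : Finset (EuclideanSpace ℝ (Fin d)), IsGenSet Z G' → G'.card = n) := by
  classical
  obtain ⟨hGpnc, v, hZv⟩ := hG
  have fwd : ∀ S ∈ G.powerset, IsGenSet Z ((G \ S) ∪ S.image (fun g => -g)) := by
    intro S hS
    rw [Finset.mem_powerset] at hS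
    refine ⟨forward_pnc hGpnc hS, v + (∑ s ∈ S, s), ?_⟩
    rw [hZv, forward_zono hGpnc hS, vadd_vadd]
    congr 1
    abel
  have conv : ∀ G', IsGenSet Z G' → ∃ S ⊆ G, G' = (G \ S) ∪ S.image (fun g => -g) := by
    rintro G' ⟨hG'pnc, v', hZv'⟩
    have heq : v +ᵥ zonotope G = v' +ᵥ zonotope G' := by rw [← hZv, ← hZv']
    exact ⟨G.filter (fun g => -g ∈ G'), Finset.filter_subset _ _, struct hGpnc hG'pnc heq⟩
  have card3 : ∀ G', IsGenSet Z G' → G'.card = n := by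
    intro G' hG'
    obtain ⟨S, hS, rfl⟩ := conv G' hG'
    rw [forward_card hGpnc hS, hn]
  refine ⟨?_, conv, card3⟩
  have hset : {G' | IsGenSet Z G'} =
      ↑(G.powerset.image (fun S => (G \ S) ∪ S.image (fun g => -g))) := by
    ext G'
    simp only [Set.mem_setOf_eq, Finset.coe_image, Set.mem_image, Finset.mem_coe,
      Finset.mem_powerset]
    constructor
    · intro h'
      obtain ⟨S, hS, rfl⟩ := conv _ h'
      exact ⟨S, hS, rfl⟩
    · rintro ⟨S, hS, rfl⟩
      exact fwd S (Finset.mem_powerset.2 hS)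
  rw [hset, Set.ncard_coe_finset]
  rw [Finset.card_image_of_injOn, Finset.card_powerset, hn]
  intro S1 h1 S2 h2 heq
  rw [Finset.mem_coe, Finset.mem_powerset] at h1 h2
  have heq' : (G \ S1) ∪ S1.image (fun g => -g) = (G \ S2) ∪ S2.image (fun g => -g) := heq
  have key : ∀ S ⊆ G, S = G.filter (fun g => -g ∈ (G \ S) ∪ S.image (fun g => -g)) := by
    intro S hS
    ext g
    simp only [Finset.mem_filter, Finset.mem_union, Finset.mem_sdiff, Finset.mem_image]
    constructor
    · intro hgS
      exact ⟨hS hgS, Or.inr ⟨g, hgS, rfl⟩⟩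
    · rintro ⟨hgG, (⟨hngG, _⟩ | ⟨s, hsS, hsg⟩)⟩
      · exact absurd hngG (neg_not_mem hGpnc hgG)
      · rwa [neg_inj.1 hsg] at hsS
  rw [key S1 h1, heq', ← key S2 h2]
end
end

section
/- For polytopes P, Q ⊂ R^3 and any nonzero vector u, the aggregated cone of the Minkowski sum satisfies C_{P+Q}(u) = C_P(u) ∪ C_Q(u). -/
open Pointwise
open scoped Classical

noncomputable section

namespace AggAux


def M (S : Finset E3) (v : E3) : Finset E3 :=
  S.filter (fun s => ∀ t ∈ S, (inner ℝ v t : ℝ) ≤ inner ℝ v s)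

def C (S : Finset E3) (v : E3) : Set E3 :=
  {w | ∀ t ∈ S, ∀ s ∈ M S v, (inner ℝ w t : ℝ) ≤ inner ℝ w s}

lemma M_subset (S : Finset E3) (v : E3) : M S v ⊆ S := Finset.filter_subset _ _

lemma mem_M_iff {S : Finset E3} {v s : E3} :
    s ∈ M S v ↔ s ∈ S ∧ ∀ t ∈ S, (inner ℝ v t : ℝ) ≤ inner ℝ v s := Finset.mem_filter

lemma M_nonempty {S : Finset E3} (hS : S.Nonempty) (v : E3) : (M S v).Nonempty := by
  obtain ⟨s, hs, hmax⟩ := S.exists_max_image (fun s => (inner ℝ v s : ℝ)) hS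
  exact ⟨s, mem_M_iff.mpr ⟨hs, hmax⟩⟩

lemma mem_C_iff {S : Finset E3} {v w : E3} :
    w ∈ C S v ↔ ∀ s ∈ M S v, s ∈ M S w := by
  constructor
  · intro h s hs
    exact mem_M_iff.mpr ⟨M_subset S v hs, fun t ht => h t ht s hs⟩
  · intro h t ht s hs
    exact (mem_M_iff.mp (h s hs)).2 t ht

lemma self_mem_C (S : Finset E3) (v : E3) : v ∈ C S v := mem_C_iff.mpr fun s hs => hs

lemma C_antitone {S : Finset E3} {v v' : E3} (h : M S v ⊆ M S v') : C S v' ⊆ C S v :=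
  fun w hw => mem_C_iff.mpr fun s hs => mem_C_iff.mp hw s (h hs)

lemma C_congr {S : Finset E3} {v v' : E3} (h : M S v = M S v') : C S v = C S v' := by
  unfold C; rw [h]

lemma inner_eq_on_M {S : Finset E3} {v w s s' : E3} (hs : s ∈ M S v) (hs' : s' ∈ M S v)
    (hw : w ∈ C S v) : (inner ℝ w s : ℝ) = inner ℝ w s' :=
  le_antisymm (hw s (M_subset S v hs) s' hs') (hw s' (M_subset S v hs') s hs)

lemma inner_eq_of_mem_M {S : Finset E3} {v s s' : E3} (hs : s ∈ M S v) (hs' : s' ∈ M S v) :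
    (inner ℝ v s : ℝ) = inner ℝ v s' :=
  le_antisymm ((mem_M_iff.mp hs').2 s (M_subset S v hs)) ((mem_M_iff.mp hs).2 s' (M_subset S v hs'))

lemma C_zero_mem (S : Finset E3) (v : E3) : (0 : E3) ∈ C S v := by
  intro t _ s _
  rw [inner_zero_left, inner_zero_left]

lemma C_add_mem {S : Finset E3} {v a b : E3} (ha : a ∈ C S v) (hb : b ∈ C S v) :
    a + b ∈ C S v := by
  intro t ht s hs
  rw [inner_add_left, inner_add_left]
  exact add_le_add (ha t ht s hs) (hb t ht s hs)

lemma C_smul_mem {S : Finset E3} {v a : E3} {c : ℝ} (hc : 0 ≤ c) (ha : a ∈ C S v) :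
    c • a ∈ C S v := by
  intro t ht s hs
  rw [real_inner_smul_left, real_inner_smul_left]
  exact mul_le_mul_of_nonneg_left (ha t ht s hs) hc

lemma span_C_sub {S : Finset E3} {v y : E3} (hy : y ∈ Submodule.span ℝ (C S v)) :
    ∃ p ∈ C S v, ∃ q ∈ C S v, y = p - q := by
  induction hy using Submodule.span_induction with
  | mem x hx => exact ⟨x, hx, 0, C_zero_mem S v, by simp⟩
  | zero => exact ⟨0, C_zero_mem S v, 0, C_zero_mem S v, by simp⟩
  | add x y _ _ hx hy =>
      obtain ⟨p, hp, q, hq, rfl⟩ := hx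
      obtain ⟨p', hp', q', hq', rfl⟩ := hy
      exact ⟨p + p', C_add_mem hp hp', q + q', C_add_mem hq hq', by abel⟩
  | smul c x _ hx =>
      obtain ⟨p, hp, q, hq, rfl⟩ := hx
      rcases le_or_gt 0 c with h | h
      · exact ⟨c • p, C_smul_mem h hp, c • q, C_smul_mem h hq, by rw [smul_sub]⟩
      · refine ⟨(-c) • q, C_smul_mem (by linarith) hq, (-c) • p, C_smul_mem (by linarith) hp, ?_⟩
        rw [smul_sub]; module



lemma inner_le_of_mem_convexHull {S : Finset E3} {w x c0 : E3} (hc : ∀ s ∈ S, (inner ℝ w s : ℝ) ≤ inner ℝ w c0)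
    (hx : x ∈ convexHull ℝ (S : Set E3)) : (inner ℝ w x : ℝ) ≤ inner ℝ w c0 := by
  have hconv : Convex ℝ {y : E3 | (inner ℝ w y : ℝ) ≤ inner ℝ w c0} :=
    convex_halfSpace_le ⟨fun a b => inner_add_right w a b, fun c a => real_inner_smul_right w a c⟩ _
  exact convexHull_min (fun s hs => hc s hs) hconv hx

lemma inner_eq_of_mem_convexHull {S : Finset E3} {w x : E3} {c : ℝ}
    (hc : ∀ s ∈ S, (inner ℝ w s : ℝ) = c) (hx : x ∈ convexHull ℝ (S : Set E3)) :
    (inner ℝ w x : ℝ) = c := by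
  have h1 : Convex ℝ {y : E3 | (inner ℝ w y : ℝ) ≤ c} :=
    convex_halfSpace_le ⟨fun a b => inner_add_right w a b, fun r a => real_inner_smul_right w a r⟩ _
  have h2 : Convex ℝ {y : E3 | c ≤ (inner ℝ w y : ℝ)} :=
    convex_halfSpace_ge ⟨fun a b => inner_add_right w a b, fun r a => real_inner_smul_right w a r⟩ _
  exact le_antisymm (convexHull_min (fun s hs => (hc s hs).le) h1 hx)
    (convexHull_min (fun s hs => (hc s hs).ge) h2 hx)

/-- The exposed face of conv S in direction v equals the hull of the finite maximizer set. -/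
lemma face_eq_convexHull_M (S : Finset E3) (hS : S.Nonempty) (v : E3) :
    {y ∈ convexHull ℝ (S : Set E3) | ∀ x ∈ convexHull ℝ (S : Set E3), (inner ℝ v x : ℝ) ≤ inner ℝ v y}
      = convexHull ℝ ((M S v : Finset E3) : Set E3) := by
  obtain ⟨s₀, hs₀⟩ := M_nonempty hS v
  have hShull : ∀ s ∈ S, s ∈ convexHull ℝ (S : Set E3) := fun s hs => subset_convexHull ℝ _ hs
  apply Set.Subset.antisymm
  · rintro y ⟨hyP, hymax⟩
    -- y is a convex combination supported on M S v
    rw [Finset.convexHull_eq] at hyP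
    obtain ⟨wt, hw0, hw1, hwy⟩ := hyP
    -- value of v at y equals max value
    have hyval : (inner ℝ v y : ℝ) = inner ℝ v s₀ := by
      refine le_antisymm ?_ (hymax s₀ (hShull s₀ (M_subset S v hs₀)))
      exact inner_le_of_mem_convexHull (fun s hs => (mem_M_iff.mp hs₀).2 s hs)
        (by rw [Finset.convexHull_eq]; exact ⟨wt, hw0, hw1, hwy⟩)
    -- supports: any s with wt s ≠ 0 lies in M S v
    have hsupp : ∀ s ∈ S, wt s ≠ 0 → s ∈ M S v := by
      intro s hs hws
      by_contra hsM
      -- then inner ℝ v s < inner ℝ v s₀ strictly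
      have hlt : (inner ℝ v s : ℝ) < inner ℝ v s₀ := by
        rcases lt_or_ge (inner ℝ v s : ℝ) (inner ℝ v s₀) with h | h
        · exact h
        · exact absurd (mem_M_iff.mpr ⟨hs, fun t ht =>
            le_trans ((mem_M_iff.mp hs₀).2 t ht) h⟩) hsM
      have hstrict : ∑ t ∈ S, wt t * (inner ℝ v t : ℝ) < ∑ t ∈ S, wt t * (inner ℝ v s₀ : ℝ) := by
        apply Finset.sum_lt_sum
        · intro i hi
          exact mul_le_mul_of_nonneg_left ((mem_M_iff.mp hs₀).2 i hi) (hw0 i hi)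
        · exact ⟨s, hs, by
            have : 0 < wt s := lt_of_le_of_ne (hw0 s hs) (Ne.symm hws)
            exact mul_lt_mul_of_pos_left hlt this⟩
      have hsum : (inner ℝ v y : ℝ) = ∑ t ∈ S, wt t * (inner ℝ v t : ℝ) := by
        rw [← hwy, Finset.centerMass, hw1, inv_one, one_smul, inner_sum]
        congr 1; ext t; rw [real_inner_smul_right]; rfl
      rw [← hsum, hyval] at hstrict
      have : ∑ t ∈ S, wt t * (inner ℝ v s₀ : ℝ) = inner ℝ v s₀ := by
        rw [← Finset.sum_mul, hw1, one_mul]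
      rw [this] at hstrict
      exact lt_irrefl _ hstrict
    -- conclude y ∈ convexHull (M S v)
    rw [← Finset.centerMass_filter_ne_zero (id : E3 → E3) (t := S) (w := wt)] at hwy
    rw [← hwy]
    apply Finset.centerMass_mem_convexHull
    · intro i hi; exact hw0 i (Finset.mem_of_mem_filter i hi)
    · rw [Finset.sum_filter_ne_zero, hw1]; norm_num
    · intro i hi
      rcases Finset.mem_filter.mp hi with ⟨hiS, hine⟩
      exact hsupp i hiS hine
  · intro y hy
    have hyP : y ∈ convexHull ℝ (S : Set E3) :=
      convexHull_mono (by exact_mod_cast M_subset S v) hy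
    refine ⟨hyP, fun x hx => ?_⟩
    have hyval : (inner ℝ v y : ℝ) = inner ℝ v s₀ :=
      inner_eq_of_mem_convexHull (fun s hs => inner_eq_of_mem_M hs hs₀) hy
    rw [hyval]
    exact inner_le_of_mem_convexHull (fun s hs => (mem_M_iff.mp hs₀).2 s hs) hx

lemma normalCone_C (S : Finset E3) (hS : S.Nonempty) (v : E3) :
    normalCone (convexHull ℝ (S : Set E3)) (convexHull ℝ ((M S v : Finset E3) : Set E3)) = C S v := by
  obtain ⟨s₀, hs₀⟩ := M_nonempty hS v
  apply Set.Subset.antisymm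
  · intro w hw t ht s hs
    exact hw t (subset_convexHull ℝ _ ht) s (subset_convexHull ℝ _ hs)
  · intro w hw x hx y hy
    have h1 : (inner ℝ w x : ℝ) ≤ inner ℝ w s₀ :=
      inner_le_of_mem_convexHull (fun s hs => hw s hs s₀ hs₀) hx
    have h2 : (inner ℝ w y : ℝ) = inner ℝ w s₀ :=
      inner_eq_of_mem_convexHull (fun s hs => inner_eq_on_M hs hs₀ hw) hy
    rw [h2]; exact h1

lemma isFace_convexHull_M (S : Finset E3) (hS : S.Nonempty) (v : E3) :
    IsFace (convexHull ℝ (S : Set E3)) (convexHull ℝ ((M S v : Finset E3) : Set E3)) := by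
  obtain ⟨s₀, hs₀⟩ := M_nonempty hS v
  constructor
  · exact ⟨s₀, subset_convexHull ℝ _ hs₀⟩
  · intro _
    refine ⟨(InnerProductSpace.toDual ℝ E3) v, ?_⟩
    rw [← face_eq_convexHull_M S hS v]
    ext y
    simp only [Set.mem_setOf_eq, InnerProductSpace.toDual_apply_apply]

lemma face_exists {S : Finset E3} (hS : S.Nonempty) {F : Set E3}
    (hF : IsFace (convexHull ℝ (S : Set E3)) F) :
    ∃ v : E3, F = convexHull ℝ ((M S v : Finset E3) : Set E3) := by
  obtain ⟨hne, hexp⟩ := hF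
  obtain ⟨l, hl⟩ := hexp hne
  refine ⟨(InnerProductSpace.toDual ℝ E3).symm l, ?_⟩
  rw [← face_eq_convexHull_M S hS _, hl]
  ext y
  simp only [Set.mem_setOf_eq, InnerProductSpace.toDual_symm_apply]



lemma inner_perturb (v x a : E3) (t : ℝ) :
    (inner ℝ (v + t • x) a : ℝ) = inner ℝ v a + t * inner ℝ x a := by
  rw [inner_add_left, real_inner_smul_left]

/-- strict inequalities are preserved under small perturbation -/
lemma eventually_inner_lt {v a b : E3} (x : E3) (h : (inner ℝ v a : ℝ) < inner ℝ v b) :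
    ∀ᶠ t in nhdsWithin (0:ℝ) (Set.Ioi 0),
      (inner ℝ (v + t • x) a : ℝ) < inner ℝ (v + t • x) b := by
  have hopen : IsOpen {t : ℝ | (inner ℝ v a : ℝ) + t * inner ℝ x a < inner ℝ v b + t * inner ℝ x b} :=
    isOpen_lt (by continuity) (by continuity)
  have h0 : (0:ℝ) ∈ {t : ℝ | (inner ℝ v a : ℝ) + t * inner ℝ x a < inner ℝ v b + t * inner ℝ x b} := by
    simpa using h
  have hn : ∀ᶠ t in nhds (0:ℝ),
      (inner ℝ v a : ℝ) + t * inner ℝ x a < inner ℝ v b + t * inner ℝ x b :=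
    hopen.mem_nhds h0
  filter_upwards [nhdsWithin_le_nhds hn] with t ht
  rw [inner_perturb, inner_perturb]
  exact ht

lemma eventually_M_perturb (S : Finset E3) (hS : S.Nonempty) (v x : E3) :
    ∀ᶠ t in nhdsWithin (0:ℝ) (Set.Ioi 0), M S (v + t • x) = M (M S v) x := by
  obtain ⟨s₀, hs₀⟩ := M_nonempty (M_nonempty hS v) x
  have hstrict : ∀ s ∈ S, s ∉ M S v → (inner ℝ v s : ℝ) < inner ℝ v (s₀ : E3) := by
    intro s hs hsM
    rcases lt_or_ge (inner ℝ v s : ℝ) (inner ℝ v s₀) with h | h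
    · exact h
    · exact absurd (mem_M_iff.mpr ⟨hs, fun t ht =>
        le_trans ((mem_M_iff.mp (M_subset _ _ hs₀)).2 t ht) h⟩) hsM
  -- part 1: elements of M (M S v) x are eventually maximizers
  have h1 : ∀ᶠ t in nhdsWithin (0:ℝ) (Set.Ioi 0),
      ∀ s ∈ M (M S v) x, s ∈ M S (v + t • x) := by
    rw [Filter.eventually_all_finset]
    intro s hs
    have hsMv : s ∈ M S v := M_subset _ _ hs
    have hgoal : ∀ᶠ t in nhdsWithin (0:ℝ) (Set.Ioi 0),
        ∀ t' ∈ S, (inner ℝ (v + t • x) t' : ℝ) ≤ inner ℝ (v + t • x) s := by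
      rw [Filter.eventually_all_finset]
      intro t' ht'
      by_cases ht'M : t' ∈ M S v
      · filter_upwards [self_mem_nhdsWithin] with t ht
        rw [inner_perturb, inner_perturb, inner_eq_of_mem_M ht'M hsMv]
        have hx : (inner ℝ x t' : ℝ) ≤ inner ℝ x s := (mem_M_iff.mp hs).2 t' ht'M
        have ht0 : (0:ℝ) ≤ t := le_of_lt ht
        nlinarith
      · have := hstrict t' ht' ht'M
        rw [inner_eq_of_mem_M (M_subset _ _ hs₀) hsMv] at this
        filter_upwards [eventually_inner_lt x this] with t ht using le_of_lt ht
    filter_upwards [hgoal] with t ht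
    exact mem_M_iff.mpr ⟨M_subset S v hsMv, ht⟩
  -- part 2: non-elements are eventually non-maximizers
  have h2 : ∀ᶠ t in nhdsWithin (0:ℝ) (Set.Ioi 0),
      ∀ s ∈ S, s ∉ M (M S v) x → s ∉ M S (v + t • x) := by
    rw [Filter.eventually_all_finset]
    intro s hs
    by_cases hsM : s ∈ M S v
    · by_cases hsx : ∀ s' ∈ M S v, (inner ℝ x s' : ℝ) ≤ inner ℝ x s
      · filter_upwards [self_mem_nhdsWithin] with t _ hmem
        exact absurd (mem_M_iff.mpr ⟨hsM, hsx⟩) (by simpa using hmem)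
      · push_neg at hsx
        obtain ⟨s', hs', hlt⟩ := hsx
        filter_upwards [self_mem_nhdsWithin] with t ht _ hmem
        have := (mem_M_iff.mp hmem).2 s' (M_subset S v hs')
        rw [inner_perturb, inner_perturb, inner_eq_of_mem_M hs' hsM] at this
        have ht0 : (0:ℝ) < t := ht
        nlinarith
    · have hlt := hstrict s hs hsM
      filter_upwards [eventually_inner_lt x hlt] with t ht _ hmem
      have := (mem_M_iff.mp hmem).2 s₀ (M_subset S v (M_subset _ _ hs₀))
      exact absurd this (not_le.mpr ht)
  filter_upwards [h1, h2] with t ht1 ht2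
  ext s
  constructor
  · intro hmem
    by_contra hne
    exact ht2 s (mem_M_iff.mp hmem).1 hne hmem
  · intro hmem
    exact ht1 s hmem

lemma eventually_sub_mem_C {S : Finset E3} {v x : E3} (hx : x ∈ C S v) :
    ∀ᶠ t in nhdsWithin (0:ℝ) (Set.Ioi 0), v - t • x ∈ C S v := by
  have key : ∀ᶠ t in nhdsWithin (0:ℝ) (Set.Ioi 0),
      ∀ t' ∈ S, ∀ s ∈ M S v, (inner ℝ (v + t • (-x)) t' : ℝ) ≤ inner ℝ (v + t • (-x)) s := by
    rw [Filter.eventually_all_finset]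
    intro t' ht'
    rw [Filter.eventually_all_finset]
    intro s hs
    by_cases ht'M : t' ∈ M S v
    · filter_upwards [self_mem_nhdsWithin] with t _
      rw [inner_perturb, inner_perturb, inner_eq_of_mem_M ht'M hs]
      have h1 : (inner ℝ x t' : ℝ) ≤ inner ℝ x s := hx t' (M_subset S v ht'M) s hs
      have h2 : (inner ℝ x s : ℝ) ≤ inner ℝ x t' := hx s (M_subset S v hs) t' ht'M
      rw [inner_neg_left, inner_neg_left, le_antisymm h1 h2]
    · have hlt : (inner ℝ v t' : ℝ) < inner ℝ v s := by
        rcases lt_or_ge (inner ℝ v t' : ℝ) (inner ℝ v s) with h | h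
        · exact h
        · exact absurd (mem_M_iff.mpr ⟨ht', fun u hu =>
            le_trans ((mem_M_iff.mp hs).2 u hu) h⟩) ht'M
      filter_upwards [eventually_inner_lt (-x) hlt] with t ht using le_of_lt ht
  filter_upwards [key] with t ht
  have : v - t • x = v + t • (-x) := by rw [smul_neg, ← sub_eq_add_neg]
  rw [this]
  exact ht

lemma eventually_add_span_mem_C {S : Finset E3} {v y : E3}
    (hy : y ∈ Submodule.span ℝ (C S v)) :
    ∀ᶠ t in nhdsWithin (0:ℝ) (Set.Ioi 0), v + t • y ∈ C S v := by
  obtain ⟨p, hp, q, hq, rfl⟩ := span_C_sub hy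
  filter_upwards [eventually_sub_mem_C hq, self_mem_nhdsWithin] with t ht ht0
  have : v + t • (p - q) = (v - t • q) + t • p := by module
  rw [this]
  exact C_add_mem ht (C_smul_mem (le_of_lt ht0) hp)



lemma mem_aggCone_iff (S : Finset E3) (hS : S.Nonempty) (u w : E3) :
    w ∈ aggCone (convexHull ℝ (S : Set E3)) u ↔
      ∃ v : E3, w ∈ C S v ∧ Module.finrank ℝ (Submodule.span ℝ (C S v)) = 2 ∧
        C S v ⊆ ((ℝ ∙ u)ᗮ : Set E3) := by
  unfold aggCone
  simp only [Set.mem_iUnion, Set.mem_setOf_eq, exists_prop]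
  constructor
  · rintro ⟨F, ⟨hF, hdim, hsub⟩, hwF⟩
    obtain ⟨v, rfl⟩ := face_exists hS hF
    rw [normalCone_C S hS v] at hdim hsub hwF
    exact ⟨v, hwF, hdim, hsub⟩
  · rintro ⟨v, hw, hdim, hsub⟩
    refine ⟨convexHull ℝ ((M S v : Finset E3) : Set E3),
      ⟨isFace_convexHull_M S hS v, ?_, ?_⟩, ?_⟩ <;>
    rw [normalCone_C S hS v] <;> assumption

lemma M_add (S T : Finset E3) (hS : S.Nonempty) (hT : T.Nonempty) (v : E3) :
    M (S + T) v = M S v + M T v := by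
  obtain ⟨s₀, hs₀⟩ := M_nonempty hS v
  obtain ⟨t₀, ht₀⟩ := M_nonempty hT v
  ext x
  simp only [Finset.mem_add]
  constructor
  · intro hx
    obtain ⟨hxST, hmax⟩ := mem_M_iff.mp hx
    obtain ⟨s, hs, t, ht, rfl⟩ := Finset.mem_add.mp hxST
    have h1 : (inner ℝ v s : ℝ) ≤ inner ℝ v s₀ := (mem_M_iff.mp hs₀).2 s hs
    have h2 : (inner ℝ v t : ℝ) ≤ inner ℝ v t₀ := (mem_M_iff.mp ht₀).2 t ht
    have h3 : (inner ℝ v (s₀ + t₀) : ℝ) ≤ inner ℝ v (s + t) :=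
      hmax _ (Finset.mem_add.mpr ⟨s₀, M_subset S v hs₀, t₀, M_subset T v ht₀, rfl⟩)
    rw [inner_add_right, inner_add_right] at h3
    have hseq : (inner ℝ v s : ℝ) = inner ℝ v s₀ := by linarith
    have hteq : (inner ℝ v t : ℝ) = inner ℝ v t₀ := by linarith
    refine ⟨s, mem_M_iff.mpr ⟨hs, fun t' ht' => hseq ▸ (mem_M_iff.mp hs₀).2 t' ht'⟩,
            t, mem_M_iff.mpr ⟨ht, fun t' ht' => hteq ▸ (mem_M_iff.mp ht₀).2 t' ht'⟩, rfl⟩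
  · rintro ⟨s, hs, t, ht, rfl⟩
    refine mem_M_iff.mpr ⟨Finset.mem_add.mpr ⟨s, M_subset S v hs, t, M_subset T v ht, rfl⟩, ?_⟩
    intro x hx
    obtain ⟨s', hs', t', ht', rfl⟩ := Finset.mem_add.mp hx
    rw [inner_add_right, inner_add_right]
    exact add_le_add ((mem_M_iff.mp hs).2 s' hs') ((mem_M_iff.mp ht).2 t' ht')

lemma C_add_eq (S T : Finset E3) (hS : S.Nonempty) (hT : T.Nonempty) (v : E3) :
    C (S + T) v = C S v ∩ C T v := by
  obtain ⟨s₀, hs₀⟩ := M_nonempty hS v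
  obtain ⟨t₀, ht₀⟩ := M_nonempty hT v
  apply Set.Subset.antisymm
  · intro w hw
    constructor
    · intro t' ht' s hs
      have := hw (t' + t₀) (Finset.mem_add.mpr ⟨t', ht', t₀, M_subset T v ht₀, rfl⟩)
        (s + t₀) (by rw [M_add S T hS hT]; exact Finset.mem_add.mpr ⟨s, hs, t₀, ht₀, rfl⟩)
      rw [inner_add_right, inner_add_right] at this
      linarith
    · intro t' ht' t ht
      have := hw (s₀ + t') (Finset.mem_add.mpr ⟨s₀, M_subset S v hs₀, t', ht', rfl⟩)
        (s₀ + t) (by rw [M_add S T hS hT]; exact Finset.mem_add.mpr ⟨s₀, hs₀, t, ht, rfl⟩)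
      rw [inner_add_right, inner_add_right] at this
      linarith
  · rintro w ⟨hwS, hwT⟩ x hx y hy
    obtain ⟨s', hs', t', ht', rfl⟩ := Finset.mem_add.mp hx
    rw [M_add S T hS hT] at hy
    obtain ⟨s, hs, t, ht, rfl⟩ := Finset.mem_add.mp hy
    rw [inner_add_right, inner_add_right]
    exact add_le_add (hwS s' hs' s hs) (hwT t' ht' t ht)

lemma conv_add (S T : Finset E3) :
    convexHull ℝ (S : Set E3) + convexHull ℝ (T : Set E3) = convexHull ℝ ((S + T : Finset E3) : Set E3) := by
  rw [Finset.coe_add, convexHull_add]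



lemma finrank_uperp {u : E3} (hu : u ≠ 0) : Module.finrank ℝ ((ℝ ∙ u)ᗮ) = 2 := by
  have h3 : Module.finrank ℝ E3 = 3 := by simp [finrank_euclideanSpace_fin]
  have := Submodule.finrank_add_finrank_orthogonal (𝕜 := ℝ) (ℝ ∙ u)
  rw [finrank_span_singleton hu, h3] at this
  omega

lemma span_eq_perp {u : E3} (hu : u ≠ 0) {A : Set E3} (h1 : A ⊆ ((ℝ ∙ u)ᗮ : Set E3))
    (h2 : Module.finrank ℝ (Submodule.span ℝ A) = 2) : Submodule.span ℝ A = (ℝ ∙ u)ᗮ :=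
  Submodule.eq_of_le_of_finrank_eq (Submodule.span_le.mpr h1)
    (by rw [h2, finrank_uperp hu])

lemma u_mem_of {u : E3} {W : Submodule ℝ E3} (hle : (ℝ ∙ u)ᗮ ≤ W) {a : E3}
    (haW : a ∈ W) (ha : a ∉ (ℝ ∙ u)ᗮ) : u ∈ W := by
  set K : Submodule ℝ E3 := ℝ ∙ u
  set pa : E3 := (K.orthogonalProjectionOnto a : E3)
  have horth : a - pa ∈ Kᗮ := K.sub_starProjection_mem_orthogonal a
  have hpaW : pa ∈ W := by
    have : pa = a - (a - pa) := by abel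
    rw [this]
    exact Submodule.sub_mem W haW (hle horth)
  have hpaK : pa ∈ K := SetLike.coe_mem _
  obtain ⟨c, hc⟩ := Submodule.mem_span_singleton.mp hpaK
  have hc0 : c ≠ 0 := by
    rintro rfl
    apply ha
    have : pa = 0 := by rw [← hc, zero_smul]
    rw [← sub_zero a, ← this]
    exact horth
  have : u = c⁻¹ • pa := by rw [← hc, smul_smul, inv_mul_cancel₀ hc0, one_smul]
  rw [this]
  exact Submodule.smul_mem W _ hpaW

/-- ⊆ direction core -/
lemma core_sub (S T : Finset E3) {u : E3} (hu : u ≠ 0) (v w : E3)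
    (hw : w ∈ C S v ∩ C T v)
    (hdim : Module.finrank ℝ (Submodule.span ℝ (C S v ∩ C T v)) = 2)
    (hsub : C S v ∩ C T v ⊆ ((ℝ ∙ u)ᗮ : Set E3)) :
    (w ∈ C S v ∧ Module.finrank ℝ (Submodule.span ℝ (C S v)) = 2 ∧
        C S v ⊆ ((ℝ ∙ u)ᗮ : Set E3)) ∨
    (w ∈ C T v ∧ Module.finrank ℝ (Submodule.span ℝ (C T v)) = 2 ∧
        C T v ⊆ ((ℝ ∙ u)ᗮ : Set E3)) := by
  have hrank : ∀ A : Set E3, C S v ∩ C T v ⊆ A → A ⊆ ((ℝ ∙ u)ᗮ : Set E3) →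
      Module.finrank ℝ (Submodule.span ℝ A) = 2 := by
    intro A hA1 hA2
    refine le_antisymm ?_ ?_
    · have h1 : Submodule.span ℝ A ≤ (ℝ ∙ u)ᗮ := Submodule.span_le.mpr hA2
      calc Module.finrank ℝ (Submodule.span ℝ A) ≤ Module.finrank ℝ ((ℝ ∙ u)ᗮ) :=
            Submodule.finrank_mono h1
        _ = 2 := finrank_uperp hu
    · have h2 : Submodule.span ℝ (C S v ∩ C T v) ≤ Submodule.span ℝ A :=
        Submodule.span_mono hA1
      calc (2:ℕ) = Module.finrank ℝ (Submodule.span ℝ (C S v ∩ C T v)) := hdim.symm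
        _ ≤ Module.finrank ℝ (Submodule.span ℝ A) := Submodule.finrank_mono h2
  by_cases hCS : C S v ⊆ ((ℝ ∙ u)ᗮ : Set E3)
  · exact Or.inl ⟨hw.1, hrank _ Set.inter_subset_left hCS, hCS⟩
  by_cases hCT : C T v ⊆ ((ℝ ∙ u)ᗮ : Set E3)
  · exact Or.inr ⟨hw.2, hrank _ Set.inter_subset_right hCT, hCT⟩
  exfalso
  obtain ⟨a, haC, haP⟩ := Set.not_subset.mp hCS
  obtain ⟨b, hbC, hbP⟩ := Set.not_subset.mp hCT
  have hspan : Submodule.span ℝ (C S v ∩ C T v) = (ℝ ∙ u)ᗮ := span_eq_perp hu hsub hdim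
  have huS : u ∈ Submodule.span ℝ (C S v) := by
    apply u_mem_of (hspan ▸ Submodule.span_mono Set.inter_subset_left)
      (Submodule.subset_span haC) haP
  have huT : u ∈ Submodule.span ℝ (C T v) := by
    apply u_mem_of (hspan ▸ Submodule.span_mono Set.inter_subset_right)
      (Submodule.subset_span hbC) hbP
  obtain ⟨t, htS, htT, ht0⟩ :=
    ((eventually_add_span_mem_C huS).and
      ((eventually_add_span_mem_C huT).and self_mem_nhdsWithin)).exists
  have hmem : v + t • u ∈ ((ℝ ∙ u)ᗮ : Set E3) := hsub ⟨htS, htT⟩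
  have hvmem : v ∈ ((ℝ ∙ u)ᗮ : Set E3) := hsub ⟨self_mem_C S v, self_mem_C T v⟩
  have h1 : (inner ℝ u (v + t • u) : ℝ) = 0 :=
    Submodule.mem_orthogonal_singleton_iff_inner_right.mp hmem
  have h2 : (inner ℝ u v : ℝ) = 0 :=
    Submodule.mem_orthogonal_singleton_iff_inner_right.mp hvmem
  rw [inner_add_right, real_inner_smul_right, h2, zero_add, real_inner_self_eq_norm_sq] at h1
  have ht0' : (0:ℝ) < t := ht0
  have := mul_eq_zero.mp h1
  rcases this with h | h
  · exact absurd h (ne_of_gt ht0')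
  · exact hu (by
      have : ‖u‖ = 0 := by nlinarith [norm_nonneg u]
      simpa using this)


/-- ⊇ direction core: refine a 2-dim cone of one summand to a 2-dim cone of the sum. -/
lemma core_sup (S T : Finset E3) (hS : S.Nonempty) (hT : T.Nonempty) {u : E3} (hu : u ≠ 0)
    (v w : E3) (hw : w ∈ C S v)
    (hdim : Module.finrank ℝ (Submodule.span ℝ (C S v)) = 2)
    (hsub : C S v ⊆ ((ℝ ∙ u)ᗮ : Set E3)) :
    ∃ v'' : E3, M S v ⊆ M S v'' ∧ M S v'' ⊆ M S w ∧ M T v'' ⊆ M T w ∧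
      Module.finrank ℝ (Submodule.span ℝ (C S v'' ∩ C T v'')) = 2 := by
  have hwM : M S v ⊆ M S w := fun s hs => mem_C_iff.mp hw s hs
  -- the feasible set of cardinalities
  set N : Set ℕ := {n | ∃ v' : E3, M S v ⊆ M S v' ∧ M S v' ⊆ M S w ∧ M T v' ⊆ M T w ∧
      (M S v').card + (M T v').card = n} with hN
  have hNne : N.Nonempty := by
    obtain ⟨t, htS, htT⟩ :=
      ((eventually_M_perturb S hS w v).and (eventually_M_perturb T hT w v)).exists
    refine ⟨_, w + t • v, ?_, ?_, ?_, rfl⟩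
    · rw [htS]
      intro s hs
      refine mem_M_iff.mpr ⟨hwM hs, fun s' hs' => ?_⟩
      exact (mem_M_iff.mp hs).2 s' (M_subset S w hs')
    · rw [htS]; exact M_subset _ _
    · rw [htT]; exact M_subset _ _
  obtain ⟨v'', hc1, hc2, hc3, hcard⟩ := Nat.sInf_mem hNne
  refine ⟨v'', hc1, hc2, hc3, ?_⟩
  -- the key claim: C S v is contained in the span of the refined cone
  have hkey : C S v ⊆ (Submodule.span ℝ (C S v'' ∩ C T v'') : Set E3) := by
    intro x hx
    obtain ⟨t, htS, htT, ht0⟩ :=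
      ((eventually_M_perturb S hS v'' x).and
        ((eventually_M_perturb T hT v'' x).and self_mem_nhdsWithin)).exists
    set v3 : E3 := v'' + t • x with hv3
    have c2' : M S v3 ⊆ M S v'' := by rw [htS]; exact M_subset _ _
    have c3' : M T v3 ⊆ M T v'' := by rw [htT]; exact M_subset _ _
    have c1' : M S v ⊆ M S v3 := by
      rw [htS]
      intro s hs
      refine mem_M_iff.mpr ⟨hc1 hs, fun s' hs' => ?_⟩
      exact hx s' (M_subset S v'' hs') s hs
    have hmemN : (M S v3).card + (M T v3).card ∈ N :=
      ⟨v3, c1', c2'.trans hc2, c3'.trans hc3, rfl⟩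
    have hle := Nat.sInf_le hmemN
    rw [← hcard] at hle
    have hS3 : M S v3 = M S v'' := by
      apply Finset.eq_of_subset_of_card_le c2'
      have := Finset.card_le_card c3'
      omega
    have hT3 : M T v3 = M T v'' := by
      apply Finset.eq_of_subset_of_card_le c3'
      have := Finset.card_le_card c2'
      omega
    have hv3mem : v3 ∈ C S v'' ∩ C T v'' := by
      constructor
      · rw [C_congr hS3.symm]; exact self_mem_C S v3
      · rw [C_congr hT3.symm]; exact self_mem_C T v3
    have hv''mem : v'' ∈ C S v'' ∩ C T v'' := ⟨self_mem_C S v'', self_mem_C T v''⟩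
    have ht0' : (t:ℝ) ≠ 0 := ne_of_gt ht0
    have hxeq : x = t⁻¹ • (v3 - v'') := by
      rw [hv3]
      rw [add_sub_cancel_left, smul_smul, inv_mul_cancel₀ ht0', one_smul]
    rw [hxeq]
    exact Submodule.smul_mem _ _ (Submodule.sub_mem _
      (Submodule.subset_span hv3mem) (Submodule.subset_span hv''mem))
  -- conclude dimension 2
  have hCsub : C S v'' ∩ C T v'' ⊆ C S v := fun y hy => C_antitone hc1 hy.1
  refine le_antisymm ?_ ?_
  · calc Module.finrank ℝ (Submodule.span ℝ (C S v'' ∩ C T v''))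
        ≤ Module.finrank ℝ ((ℝ ∙ u)ᗮ) :=
          Submodule.finrank_mono (Submodule.span_le.mpr (fun y hy => hsub (hCsub hy)))
      _ = 2 := finrank_uperp hu
  · have hCspan : Submodule.span ℝ (C S v) = (ℝ ∙ u)ᗮ := span_eq_perp hu hsub hdim
    calc (2:ℕ) = Module.finrank ℝ ((ℝ ∙ u)ᗮ) := (finrank_uperp hu).symm
      _ = Module.finrank ℝ (Submodule.span ℝ (C S v)) := by rw [hCspan]
      _ ≤ Module.finrank ℝ (Submodule.span ℝ (C S v'' ∩ C T v'')) :=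
          Submodule.finrank_mono (Submodule.span_le.mpr hkey)


end AggAux

theorem aggCone_minkowski_sum (P Q : Set E3) (hP : IsPolytope P) (hQ : IsPolytope Q)
    (u : E3) (hu : u ≠ 0) :
    aggCone (P + Q) u = aggCone P u ∪ aggCone Q u := by
  obtain ⟨S, hS, rfl⟩ := hP
  obtain ⟨T, hT, rfl⟩ := hQ
  have hST : (S + T).Nonempty := hS.add hT
  rw [AggAux.conv_add S T]
  ext w
  rw [Set.mem_union, AggAux.mem_aggCone_iff (S + T) hST u w, AggAux.mem_aggCone_iff S hS u w,
      AggAux.mem_aggCone_iff T hT u w]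
  constructor
  · rintro ⟨v, hwv, hdim, hsub⟩
    rw [AggAux.C_add_eq S T hS hT v] at hwv hdim hsub
    rcases AggAux.core_sub S T hu v w hwv hdim hsub with ⟨h1, h2, h3⟩ | ⟨h1, h2, h3⟩
    · exact Or.inl ⟨v, h1, h2, h3⟩
    · exact Or.inr ⟨v, h1, h2, h3⟩
  · rintro (⟨v, hwv, hdim, hsub⟩ | ⟨v, hwv, hdim, hsub⟩)
    · obtain ⟨v'', hc1, hc2, hc3, hdim''⟩ :=
        AggAux.core_sup S T hS hT hu v w hwv hdim hsub
      refine ⟨v'', ?_, ?_, ?_⟩ <;> rw [AggAux.C_add_eq S T hS hT v'']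
      · exact ⟨AggAux.mem_C_iff.mpr (fun s hs => hc2 hs),
               AggAux.mem_C_iff.mpr (fun s hs => hc3 hs)⟩
      · exact hdim''
      · exact fun y hy => hsub (AggAux.C_antitone hc1 hy.1)
    · obtain ⟨v'', hc1, hc2, hc3, hdim''⟩ :=
        AggAux.core_sup T S hT hS hu v w hwv hdim hsub
      refine ⟨v'', ?_, ?_, ?_⟩ <;> rw [AggAux.C_add_eq S T hS hT v'']
      · exact ⟨AggAux.mem_C_iff.mpr (fun s hs => hc3 hs),
               AggAux.mem_C_iff.mpr (fun s hs => hc2 hs)⟩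
      · rw [Set.inter_comm]; exact hdim''
      · exact fun y hy => hsub (AggAux.C_antitone hc1 hy.2)
end
end
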